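/- Fix I ⊆ {1,…,N} with |I| = k and δ ∈ (0,1). Suppose ‖(Φ_I^T Φ_I)^{−1}‖ ≤ 1/(1−δ) and ‖Φ_I^T φ_i‖₂² ≤ (1−δ)²/(8·log(2N/ε)) for all i ∈ I^c. Let ζ ∈ {−1,+1}^I have i.i.d. uniform entries, and set v = Φ^T Φ_I (Φ_I^T Φ_I)^{−1} ζ. Then with probability at least 1−ε over ζ, the vector v lies in the row space of Φ, satisfies v_I = ζ, and satisfies ‖v_{I^c}‖_∞ ≤ 1/2. -/

import Mathlib

open Finset Matrix

open scoped Classical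

noncomputable section

/-- The ℓ₂→ℓ₂ operator (spectral) norm of a real matrix. -/
def specNorm {α β : Type*} [Fintype α] [Fintype β] (A : Matrix α β ℝ) : ℝ :=
  sSup {t : ℝ | ∃ x : β → ℝ, (∑ j, x j ^ 2) ≤ 1 ∧ t = Real.sqrt (∑ i, (∑ j, A i j * x j) ^ 2)}

variable {m N : ℕ}

/-- The submatrix of `Φ` formed by the columns indexed by `I`. -/
def colSub (Φ : Matrix (Fin m) (Fin N) ℝ) (I : Finset (Fin N)) :
    Matrix (Fin m) {i // i ∈ I} ℝ :=
  Matrix.of fun r j => Φ r (j : Fin N)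

/-- The Gram matrix `Φ_Iᵀ Φ_I`. -/
def gram (Φ : Matrix (Fin m) (Fin N) ℝ) (I : Finset (Fin N)) :
    Matrix {i // i ∈ I} {i // i ∈ I} ℝ :=
  (colSub Φ I)ᵀ * colSub Φ I

/-- `‖Φ_Iᵀ φ_i‖₂²`. -/
def sincSq (Φ : Matrix (Fin m) (Fin N) ℝ) (I : Finset (Fin N)) (i : Fin N) : ℝ :=
  ∑ j ∈ I, (∑ r, Φ r j * Φ r i) ^ 2

/-- All columns of `Φ` have unit ℓ₂ norm. -/
def unitCols (Φ : Matrix (Fin m) (Fin N) ℝ) : Prop :=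
  ∀ j, (∑ r, Φ r j ^ 2) = 1

/-- `Φ` is `(k,δ,ε)`-StRIP: a uniformly random `k`-subset `I` satisfies
`‖Φ_Iᵀ Φ_I − Id‖ ≤ δ` with probability at least `1 − ε`. -/
def StRIP (Φ : Matrix (Fin m) (Fin N) ℝ) (k : ℕ) (δ ε : ℝ) : Prop :=
  (1 - ε) * ((Finset.powersetCard k (univ : Finset (Fin N))).card : ℝ) ≤
    (((Finset.powersetCard k (univ : Finset (Fin N))).filter
        fun I => specNorm (gram Φ I - 1) ≤ δ).card : ℝ)

/-- `Φ` is `(k,α,ε)`-SINC: a uniformly random `k`-subset `I` satisfies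
`max_{i ∉ I} ‖Φ_Iᵀ φ_i‖₂² ≤ α` with probability at least `1 − ε`. -/
def SINC (Φ : Matrix (Fin m) (Fin N) ℝ) (k : ℕ) (α ε : ℝ) : Prop :=
  (1 - ε) * ((Finset.powersetCard k (univ : Finset (Fin N))).card : ℝ) ≤
    (((Finset.powersetCard k (univ : Finset (Fin N))).filter
        fun I => ∀ i ∉ I, sincSq Φ I i ≤ α).card : ℝ)

/-- ℓ₁ norm on `ℝ^N`. -/
def l1 (x : Fin N → ℝ) : ℝ := ∑ i, |x i|

/-- ℓ₂ norm on `ℝ^N`. -/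
def l2 (x : Fin N → ℝ) : ℝ := Real.sqrt (∑ i, x i ^ 2)

/-- Restriction `x_I` of a vector to the coordinates in `I` (zero outside `I`). -/
def restr (I : Finset (Fin N)) (x : Fin N → ℝ) : Fin N → ℝ :=
  fun i => if i ∈ I then x i else 0

/-- `x` is `k`-sparse. -/
def kSparse (k : ℕ) (x : Fin N → ℝ) : Prop :=
  ((univ : Finset (Fin N)).filter fun i => x i ≠ 0).card ≤ k

/-- `min_{x' k-sparse} ‖x − x′‖₁`. -/
def bestK (k : ℕ) (x : Fin N → ℝ) : ℝ :=
  sInf {t : ℝ | ∃ x' : Fin N → ℝ, kSparse k x' ∧ t = l1 (x - x')}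

/-- `xh` is a (noiseless) Basis Pursuit solution for the data `y`. -/
def isBPsol (Φ : Matrix (Fin m) (Fin N) ℝ) (y : Fin m → ℝ) (xh : Fin N → ℝ) : Prop :=
  Φ.mulVec xh = y ∧ ∀ u : Fin N → ℝ, Φ.mulVec u = y → l1 xh ≤ l1 u

/-- The ±1 vector on `I` associated with a Boolean vector. -/
def signVec {I : Finset (Fin N)} (b : {i // i ∈ I} → Bool) : {i // i ∈ I} → ℝ :=
  fun j => if b j then 1 else -1

/-- The dual certificate `v = Φᵀ Φ_I (Φ_Iᵀ Φ_I)⁻¹ ζ`. -/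
def vvec (Φ : Matrix (Fin m) (Fin N) ℝ) (I : Finset (Fin N)) (ζ : {i // i ∈ I} → ℝ) :
    Fin N → ℝ :=
  Φᵀ.mulVec ((colSub Φ I).mulVec ((gram Φ I)⁻¹.mulVec ζ))

lemma specSet_bddAbove {α β : Type*} [Fintype α] [Fintype β] (A : Matrix α β ℝ) :
    BddAbove {t : ℝ | ∃ x : β → ℝ, (∑ j, x j ^ 2) ≤ 1 ∧ t = Real.sqrt (∑ i, (∑ j, A i j * x j) ^ 2)} := by
  refine ⟨Real.sqrt (∑ i, ∑ j, A i j ^ 2), ?_⟩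
  rintro t ⟨x, hx, rfl⟩
  apply Real.sqrt_le_sqrt
  apply Finset.sum_le_sum
  intro i _
  calc (∑ j, A i j * x j) ^ 2 ≤ (∑ j, A i j ^ 2) * ∑ j, x j ^ 2 :=
        Finset.sum_mul_sq_le_sq_mul_sq _ _ _
    _ ≤ (∑ j, A i j ^ 2) * 1 :=
        mul_le_mul_of_nonneg_left hx (Finset.sum_nonneg fun j _ => sq_nonneg _)
    _ = ∑ j, A i j ^ 2 := mul_one _

lemma specNorm_nonneg {α β : Type*} [Fintype α] [Fintype β] (A : Matrix α β ℝ) :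
    0 ≤ specNorm A := by
  have h0 : (0:ℝ) ∈ {t : ℝ | ∃ x : β → ℝ, (∑ j, x j ^ 2) ≤ 1 ∧ t = Real.sqrt (∑ i, (∑ j, A i j * x j) ^ 2)} :=
    ⟨0, by simp, by simp⟩
  exact le_csSup (specSet_bddAbove A) h0

lemma specNorm_bound {α β : Type*} [Fintype α] [Fintype β] (A : Matrix α β ℝ) (x : β → ℝ) :
    ∑ i, (∑ j, A i j * x j) ^ 2 ≤ (specNorm A) ^ 2 * ∑ j, x j ^ 2 := by
  rcases eq_or_ne (∑ j, x j ^ 2) 0 with h0 | h0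
  · have hx : ∀ j, x j = 0 := by
      intro j
      have := (Finset.sum_eq_zero_iff_of_nonneg (fun j _ => sq_nonneg (x j))).1 h0 j (mem_univ j)
      exact pow_eq_zero_iff (n := 2) (by norm_num) |>.1 this
    simp [hx, h0]
  · have hpos : 0 < ∑ j, x j ^ 2 :=
      lt_of_le_of_ne (Finset.sum_nonneg fun j _ => sq_nonneg _) (Ne.symm h0)
    set n := Real.sqrt (∑ j, x j ^ 2) with hn
    have hnpos : 0 < n := Real.sqrt_pos.2 hpos
    have hn2 : n ^ 2 = ∑ j, x j ^ 2 := Real.sq_sqrt hpos.le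
    have hy : (∑ j, (x j / n) ^ 2) ≤ 1 := by
      simp only [div_pow, ← Finset.sum_div, ← hn2]
      rw [div_self (by positivity)]
    have hmem : Real.sqrt (∑ i, (∑ j, A i j * (x j / n)) ^ 2) ≤ specNorm A :=
      le_csSup (specSet_bddAbove A) ⟨fun j => x j / n, hy, rfl⟩
    have hco : ∀ i, (∑ j, A i j * (x j / n)) = (∑ j, A i j * x j) / n := by
      intro i; rw [Finset.sum_div]; congr 1; ext j; ring
    have hsq : Real.sqrt (∑ i, (∑ j, A i j * x j) ^ 2) ≤ specNorm A * n := by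
      have h := hmem
      simp only [hco, div_pow, ← Finset.sum_div] at h
      rw [Real.sqrt_div (Finset.sum_nonneg fun i _ => sq_nonneg _), Real.sqrt_sq hnpos.le,
        div_le_iff₀ hnpos] at h
      exact h
    calc ∑ i, (∑ j, A i j * x j) ^ 2
        = Real.sqrt (∑ i, (∑ j, A i j * x j) ^ 2) ^ 2 :=
          (Real.sq_sqrt (Finset.sum_nonneg fun i _ => sq_nonneg _)).symm
      _ ≤ (specNorm A * n) ^ 2 := by
          refine pow_le_pow_left₀ (Real.sqrt_nonneg _) hsq 2
      _ = (specNorm A) ^ 2 * ∑ j, x j ^ 2 := by rw [mul_pow, hn2]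


section Hoeff
variable {J : Type*} [Fintype J] [DecidableEq J]

lemma mgf_eq (a : J → ℝ) (l : ℝ) :
    ∑ b : J → Bool, Real.exp (l * ∑ j, a j * (if b j then (1:ℝ) else -1)) =
      ∏ j, (Real.exp (l * a j) + Real.exp (-(l * a j))) := by
  have h1 : ∀ b : J → Bool, Real.exp (l * ∑ j, a j * (if b j then (1:ℝ) else -1)) =
      ∏ j, Real.exp (l * (a j * (if b j then (1:ℝ) else -1))) := by
    intro b; rw [← Real.exp_sum, ← Finset.mul_sum]
  simp only [h1]
  have h2 := Finset.sum_prod_piFinset (ι := J) (univ : Finset Bool)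
    (fun j v => Real.exp (l * (a j * if v then (1:ℝ) else -1)))
  rw [Fintype.piFinset_univ] at h2
  rw [h2]
  refine Finset.prod_congr rfl fun j _ => ?_
  rw [Fintype.sum_bool]
  simp [mul_one, mul_neg_one, mul_neg]

lemma tail_count (a : J → ℝ) (t s : ℝ) (ht : 0 < t) (hs : 0 < s)
    (ha : ∑ j, a j ^ 2 ≤ s) :
    (((univ : Finset (J → Bool)).filter
        fun b => t ≤ ∑ j, a j * (if b j then (1:ℝ) else -1)).card : ℝ)
      ≤ Real.exp (-(t ^ 2) / (2 * s)) * ((univ : Finset (J → Bool)).card : ℝ) := by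
  set l := t / s with hl
  have hl0 : 0 < l := div_pos ht hs
  set S : (J → Bool) → ℝ := fun b => ∑ j, a j * (if b j then (1:ℝ) else -1) with hS
  -- Markov
  have markov : (((univ : Finset (J → Bool)).filter fun b => t ≤ S b).card : ℝ) * Real.exp (l * t)
      ≤ ∑ b : J → Bool, Real.exp (l * S b) := by
    calc (((univ : Finset (J → Bool)).filter fun b => t ≤ S b).card : ℝ) * Real.exp (l * t)
        = ∑ _b ∈ (univ : Finset (J → Bool)).filter fun b => t ≤ S b, Real.exp (l * t) := by
          rw [Finset.sum_const, nsmul_eq_mul]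
      _ ≤ ∑ b ∈ (univ : Finset (J → Bool)).filter fun b => t ≤ S b, Real.exp (l * S b) := by
          refine Finset.sum_le_sum fun b hb => ?_
          exact Real.exp_le_exp.2 (mul_le_mul_of_nonneg_left (Finset.mem_filter.1 hb).2 hl0.le)
      _ ≤ ∑ b : J → Bool, Real.exp (l * S b) := by
          refine Finset.sum_le_sum_of_subset_of_nonneg (Finset.filter_subset _ _)
            fun b _ _ => (Real.exp_pos _).le
  -- MGF bound
  have mgfb : ∑ b : J → Bool, Real.exp (l * S b)
      ≤ Real.exp (l ^ 2 * s / 2) * ((univ : Finset (J → Bool)).card : ℝ) := by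
    rw [hS, mgf_eq a l]
    have hjb : ∀ j : J, Real.exp (l * a j) + Real.exp (-(l * a j))
        ≤ 2 * Real.exp ((l * a j) ^ 2 / 2) := by
      intro j
      have := Real.cosh_le_exp_half_sq (l * a j)
      rw [Real.cosh_eq] at this
      linarith
    calc ∏ j, (Real.exp (l * a j) + Real.exp (-(l * a j)))
        ≤ ∏ j, 2 * Real.exp ((l * a j) ^ 2 / 2) := by
          refine Finset.prod_le_prod (fun j _ => by positivity) fun j _ => hjb j
      _ = 2 ^ Fintype.card J * Real.exp (∑ j, (l * a j) ^ 2 / 2) := by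
          rw [Finset.prod_mul_distrib, Finset.prod_const, ← Real.exp_sum, Finset.card_univ]
      _ ≤ 2 ^ Fintype.card J * Real.exp (l ^ 2 * s / 2) := by
          refine mul_le_mul_of_nonneg_left (Real.exp_le_exp.2 ?_) (by positivity)
          have : ∑ j, (l * a j) ^ 2 / 2 = l ^ 2 * (∑ j, a j ^ 2) / 2 := by
            rw [Finset.mul_sum, Finset.sum_div]; congr 1; ext j; ring
          rw [this]
          have h2 : l ^ 2 * (∑ j, a j ^ 2) ≤ l ^ 2 * s :=
            mul_le_mul_of_nonneg_left ha (sq_nonneg _)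
          linarith
      _ = Real.exp (l ^ 2 * s / 2) * ((univ : Finset (J → Bool)).card : ℝ) := by
          rw [mul_comm]; congr 1
          simp [Finset.card_univ, Fintype.card_fun]
  have key : (((univ : Finset (J → Bool)).filter fun b => t ≤ S b).card : ℝ)
      ≤ Real.exp (l ^ 2 * s / 2 - l * t) * ((univ : Finset (J → Bool)).card : ℝ) := by
    have h := le_trans markov mgfb
    rw [Real.exp_sub, div_mul_eq_mul_div, le_div_iff₀ (Real.exp_pos _)]
    exact h
  have hexp : l ^ 2 * s / 2 - l * t = -(t ^ 2) / (2 * s) := by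
    rw [hl]
    field_simp
    ring
  rwa [hexp] at key
end Hoeff

section Hoeff2
variable {J : Type*} [Fintype J] [DecidableEq J]

lemma abs_tail_count (a : J → ℝ) (t s : ℝ) (ht : 0 < t) (hs : 0 < s)
    (ha : ∑ j, a j ^ 2 ≤ s) :
    (((univ : Finset (J → Bool)).filter
        fun b => t ≤ |∑ j, a j * (if b j then (1:ℝ) else -1)|).card : ℝ)
      ≤ 2 * Real.exp (-(t ^ 2) / (2 * s)) * ((univ : Finset (J → Bool)).card : ℝ) := by
  have hsub : ((univ : Finset (J → Bool)).filter
        fun b => t ≤ |∑ j, a j * (if b j then (1:ℝ) else -1)|) ⊆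
      ((univ : Finset (J → Bool)).filter
        fun b => t ≤ ∑ j, a j * (if b j then (1:ℝ) else -1)) ∪
      ((univ : Finset (J → Bool)).filter
        fun b => t ≤ ∑ j, (-a j) * (if b j then (1:ℝ) else -1)) := by
    intro b hb
    rw [Finset.mem_filter] at hb
    rcases le_abs.1 hb.2 with h | h
    · exact Finset.mem_union_left _ (Finset.mem_filter.2 ⟨Finset.mem_univ _, h⟩)
    · refine Finset.mem_union_right _ (Finset.mem_filter.2 ⟨Finset.mem_univ _, ?_⟩)
      calc t ≤ -∑ j, a j * (if b j then (1:ℝ) else -1) := h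
        _ = ∑ j, (-a j) * (if b j then (1:ℝ) else -1) := by
            rw [← Finset.sum_neg_distrib]; congr 1; ext j; ring
  have h1 := tail_count a t s ht hs ha
  have h2 := tail_count (fun j => -a j) t s ht hs (by simpa using ha)
  calc (((univ : Finset (J → Bool)).filter
        fun b => t ≤ |∑ j, a j * (if b j then (1:ℝ) else -1)|).card : ℝ)
      ≤ ((((univ : Finset (J → Bool)).filter
            fun b => t ≤ ∑ j, a j * (if b j then (1:ℝ) else -1)) ∪
          ((univ : Finset (J → Bool)).filter
            fun b => t ≤ ∑ j, (-a j) * (if b j then (1:ℝ) else -1))).card : ℝ) := by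
        exact_mod_cast Finset.card_le_card hsub
    _ ≤ (((univ : Finset (J → Bool)).filter
            fun b => t ≤ ∑ j, a j * (if b j then (1:ℝ) else -1)).card : ℝ) +
        (((univ : Finset (J → Bool)).filter
            fun b => t ≤ ∑ j, (-a j) * (if b j then (1:ℝ) else -1)).card : ℝ) := by
        exact_mod_cast Finset.card_union_le _ _
    _ ≤ _ := by nlinarith [h1, h2]
end Hoeff2


lemma gram_symm (Φ : Matrix (Fin m) (Fin N) ℝ) (I : Finset (Fin N)) :
    (gram Φ I)ᵀ = gram Φ I := by
  simp [_root_.gram, Matrix.transpose_mul]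

lemma gram_inv_symm (Φ : Matrix (Fin m) (Fin N) ℝ) (I : Finset (Fin N)) :
    ((gram Φ I)⁻¹)ᵀ = (gram Φ I)⁻¹ := by
  rw [Matrix.transpose_nonsing_inv, gram_symm]

lemma vvec_on (Φ : Matrix (Fin m) (Fin N) ℝ) (I : Finset (Fin N))
    (hunit : IsUnit (gram Φ I)) (ζ : {i // i ∈ I} → ℝ) (j : {i // i ∈ I}) :
    vvec Φ I ζ (j : Fin N) = ζ j := by
  have hd : IsUnit (gram Φ I).det := (Matrix.isUnit_iff_isUnit_det _).1 hunit
  have h1 : gram Φ I * (gram Φ I)⁻¹ = 1 := Matrix.mul_nonsing_inv _ hd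
  have h2 : vvec Φ I ζ (j : Fin N)
      = ((colSub Φ I)ᵀ.mulVec ((colSub Φ I).mulVec ((gram Φ I)⁻¹.mulVec ζ))) j := by
    simp [vvec, Matrix.mulVec, dotProduct, colSub, Matrix.transpose_apply]
  rw [h2, Matrix.mulVec_mulVec, ← _root_.gram, Matrix.mulVec_mulVec, h1, Matrix.one_mulVec]

lemma vvec_dot (Φ : Matrix (Fin m) (Fin N) ℝ) (I : Finset (Fin N)) (ζ : {i // i ∈ I} → ℝ)
    (i : Fin N) :
    vvec Φ I ζ i = ∑ j : {i // i ∈ I},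
      ((gram Φ I)⁻¹.mulVec (fun j' : {i // i ∈ I} => ∑ r, Φ r (j' : Fin N) * Φ r i)) j * ζ j := by
  set c : {i // i ∈ I} → ℝ := fun j' => ∑ r, Φ r (j' : Fin N) * Φ r i with hc
  have h1 : vvec Φ I ζ i = c ⬝ᵥ ((gram Φ I)⁻¹.mulVec ζ) := by
    set u := (gram Φ I)⁻¹.mulVec ζ with hu
    show Φᵀ.mulVec ((colSub Φ I).mulVec u) i = c ⬝ᵥ u
    simp only [Matrix.mulVec, dotProduct, Matrix.transpose_apply, colSub,
      Matrix.of_apply, hc, Finset.mul_sum, Finset.sum_mul]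
    rw [Finset.sum_comm]
    refine Finset.sum_congr rfl fun j' _ => Finset.sum_congr rfl fun r _ => by ring
  rw [h1, dotProduct_mulVec, ← Matrix.mulVec_transpose, gram_inv_symm]
  rfl


set_option maxHeartbeats 1600000 in
/-- Lemma: the dual certificate exists with probability `≥ 1 − ε`
over i.i.d. uniform signs. -/
theorem stmt3 (m N k : ℕ) (δ ε : ℝ) (hδ0 : 0 < δ) (hδ1 : δ < 1) (hε0 : 0 < ε) (hε1 : ε < 1)
    (Φ : Matrix (Fin m) (Fin N) ℝ) (hcols : unitCols Φ)
    (I : Finset (Fin N)) (hI : I.card = k)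
    (hunit : IsUnit (gram Φ I))
    (hinv : specNorm (gram Φ I)⁻¹ ≤ 1 / (1 - δ))
    (hsinc : ∀ i ∉ I, sincSq Φ I i ≤ (1 - δ) ^ 2 / (8 * Real.log (2 * N / ε))) :
    (1 - ε) * (((univ : Finset ({i // i ∈ I} → Bool)).card : ℝ)) ≤
      ((((univ : Finset ({i // i ∈ I} → Bool)).filter
          (fun b =>
            (∃ w : Fin m → ℝ, vvec Φ I (signVec b) = Φᵀ.mulVec w) ∧
            (∀ j : {i // i ∈ I}, vvec Φ I (signVec b) (j : Fin N) = signVec b j) ∧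
            (∀ i ∉ I, |vvec Φ I (signVec b) i| ≤ 1 / 2))).card : ℝ)) := by
  have hPQ : ∀ b : {i // i ∈ I} → Bool,
      ((∃ w : Fin m → ℝ, vvec Φ I (signVec b) = Φᵀ.mulVec w) ∧
        (∀ j : {i // i ∈ I}, vvec Φ I (signVec b) (j : Fin N) = signVec b j) ∧
        (∀ i ∉ I, |vvec Φ I (signVec b) i| ≤ 1 / 2)) ↔
      (∀ i ∉ I, |vvec Φ I (signVec b) i| ≤ 1 / 2) :=
    fun b => ⟨fun h => h.2.2, fun h => ⟨⟨_, rfl⟩, fun j => vvec_on Φ I hunit _ j, h⟩⟩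
  rw [Finset.filter_congr (fun b _ => hPQ b)]
  set C : ℝ := ((univ : Finset ({i // i ∈ I} → Bool)).card : ℝ) with hC
  have hC0 : 0 ≤ C := Nat.cast_nonneg _
  rcases Nat.eq_zero_or_pos N with hN | hN
  · subst hN
    have hall : ∀ b ∈ (univ : Finset ({i // i ∈ I} → Bool)),
        (∀ i ∉ I, |vvec Φ I (signVec b) i| ≤ 1 / 2) := fun b _ i => i.elim0
    rw [Finset.filter_true_of_mem hall]
    nlinarith
  · -- main case
    set L : ℝ := Real.log (2 * N / ε) with hLdef
    have hNR : (1:ℝ) ≤ (N:ℝ) := by exact_mod_cast hN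
    have hq : (1:ℝ) < 2 * N / ε := by
      rw [lt_div_iff₀ hε0]; nlinarith
    have hL : 0 < L := Real.log_pos hq
    set s : ℝ := 1 / (8 * L) with hsdef
    have hs : 0 < s := by positivity
    have hδ' : (0:ℝ) < 1 - δ := by linarith
    -- per-coordinate bad-set bound
    have hbad : ∀ i ∉ I,
        (((univ : Finset ({i // i ∈ I} → Bool)).filter
            fun b => 1/2 ≤ |vvec Φ I (signVec b) i|).card : ℝ) ≤ ε / N * C := by
      intro i hi
      set c : {i // i ∈ I} → ℝ := fun j' => ∑ r, Φ r (j' : Fin N) * Φ r i with hc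
      set a : {i // i ∈ I} → ℝ := (gram Φ I)⁻¹.mulVec c with ha
      have hvi : ∀ b : {i // i ∈ I} → Bool,
          vvec Φ I (signVec b) i = ∑ j, a j * (if b j then (1:ℝ) else -1) := by
        intro b
        rw [vvec_dot]
        rfl
      have hcs : ∑ j : {i // i ∈ I}, c j ^ 2 = sincSq Φ I i := by
        rw [hc, sincSq]
        exact Finset.sum_coe_sort I (fun j => (∑ r, Φ r j * Φ r i) ^ 2)
      have hcs0 : 0 ≤ ∑ j : {i // i ∈ I}, c j ^ 2 :=
        Finset.sum_nonneg fun j _ => sq_nonneg _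
      have hanorm : ∑ j, a j ^ 2 ≤ s := by
        have h1 : ∑ j, a j ^ 2 ≤ (specNorm (gram Φ I)⁻¹) ^ 2 * ∑ j : {i // i ∈ I}, c j ^ 2 := by
          have := specNorm_bound (gram Φ I)⁻¹ c
          simpa [ha, Matrix.mulVec, dotProduct] using this
        have h2 : (specNorm (gram Φ I)⁻¹) ^ 2 ≤ (1 / (1 - δ)) ^ 2 :=
          pow_le_pow_left₀ (specNorm_nonneg _) hinv 2
        have h3 : ∑ j : {i // i ∈ I}, c j ^ 2 ≤ (1 - δ) ^ 2 / (8 * L) := by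
          rw [hcs]; exact hsinc i hi
        have h4 : (specNorm (gram Φ I)⁻¹) ^ 2 * ∑ j : {i // i ∈ I}, c j ^ 2
            ≤ (1 / (1 - δ)) ^ 2 * ((1 - δ) ^ 2 / (8 * L)) :=
          mul_le_mul h2 h3 hcs0 (by positivity)
        have h5 : (1 / (1 - δ)) ^ 2 * ((1 - δ) ^ 2 / (8 * L)) = s := by
          rw [hsdef]
          field_simp
        linarith
      have htail := abs_tail_count a (1/2) s (by norm_num) hs hanorm
      have hfe : ((univ : Finset ({i // i ∈ I} → Bool)).filter
            fun b => 1/2 ≤ |vvec Φ I (signVec b) i|) =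
          ((univ : Finset ({i // i ∈ I} → Bool)).filter
            fun b => 1/2 ≤ |∑ j, a j * (if b j then (1:ℝ) else -1)|) := by
        refine Finset.filter_congr fun b _ => ?_
        rw [hvi b]
      rw [hfe]
      have hexp : -((1/2:ℝ) ^ 2) / (2 * s) = -L := by
        rw [hsdef]
        field_simp
        ring
      have hval : 2 * Real.exp (-((1/2:ℝ) ^ 2) / (2 * s)) = ε / N := by
        rw [hexp, Real.exp_neg, Real.exp_log (by positivity)]
        field_simp
      calc (((univ : Finset ({i // i ∈ I} → Bool)).filter
            fun b => 1/2 ≤ |∑ j, a j * (if b j then (1:ℝ) else -1)|).card : ℝ)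
          ≤ 2 * Real.exp (-((1/2:ℝ) ^ 2) / (2 * s)) * C := htail
        _ = ε / N * C := by rw [hval]
    -- union bound
    set Bad := (univ : Finset ({i // i ∈ I} → Bool)).filter
        fun b => ¬ (∀ i ∉ I, |vvec Φ I (signVec b) i| ≤ 1 / 2) with hBad
    have hsub : Bad ⊆ Iᶜ.biUnion fun i =>
        (univ : Finset ({i // i ∈ I} → Bool)).filter
          fun b => 1/2 ≤ |vvec Φ I (signVec b) i| := by
      intro b hb
      rw [hBad, Finset.mem_filter] at hb
      push_neg at hb
      obtain ⟨i, hi, hgt⟩ := hb.2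
      refine Finset.mem_biUnion.2 ⟨i, Finset.mem_compl.2 hi, Finset.mem_filter.2
        ⟨Finset.mem_univ _, le_of_lt hgt⟩⟩
    have hBadcard : (Bad.card : ℝ) ≤ ε * C := by
      calc (Bad.card : ℝ)
          ≤ ((Iᶜ.biUnion fun i => (univ : Finset ({i // i ∈ I} → Bool)).filter
              fun b => 1/2 ≤ |vvec Φ I (signVec b) i|).card : ℝ) := by
            exact_mod_cast Finset.card_le_card hsub
        _ ≤ ∑ i ∈ Iᶜ, (((univ : Finset ({i // i ∈ I} → Bool)).filter
              fun b => 1/2 ≤ |vvec Φ I (signVec b) i|).card : ℝ) := by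
            exact_mod_cast Finset.card_biUnion_le
        _ ≤ ∑ _i ∈ Iᶜ, ε / N * C :=
            Finset.sum_le_sum fun i hi => hbad i (Finset.mem_compl.1 hi)
        _ = (Iᶜ.card : ℝ) * (ε / N * C) := by rw [Finset.sum_const, nsmul_eq_mul]
        _ ≤ (N : ℝ) * (ε / N * C) := by
            refine mul_le_mul_of_nonneg_right ?_ (by positivity)
            have : Iᶜ.card ≤ Fintype.card (Fin N) := Finset.card_le_univ _
            rw [Fintype.card_fin] at this
            exact_mod_cast this
        _ = ε * C := by field_simp
    have hsplit := Finset.card_filter_add_card_filter_not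
      (s := (univ : Finset ({i // i ∈ I} → Bool)))
      (p := fun b => ∀ i ∉ I, |vvec Φ I (signVec b) i| ≤ 1 / 2)
    have hsplit' : (((univ : Finset ({i // i ∈ I} → Bool)).filter
        fun b => ∀ i ∉ I, |vvec Φ I (signVec b) i| ≤ 1 / 2).card : ℝ) + (Bad.card : ℝ) = C := by
      rw [hBad, hC]
      exact_mod_cast hsplit
    linarith
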